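/- For every even positive integer i, there is a bipartite graph G with partite sets A and B such that |A| = |B| = i + 2i², exactly i vertices of A are isolated, all other vertices of A have degree exactly 2, and every bihole in G has order at most i² + (3/4)·i. (This graph consists of i isolated vertices, all in A, together with i vertex-disjoint paths, each of order 4i + 1, whose endpoints all belong to B; it shows that the coefficient 3/4 of n₀ in the bound α̃(0^{n₀},1^{n₁},2^{n₂}) ≥ (3/4)n₀ + (1/2)(n₁+n₂) − 7/4 is best possible.) -/

import Mathlib

open Finset

/-- `A`, `B` form a bipartition of the simple graph `G`: they are disjoint,
cover all vertices, and every edge joins `A` to `B`. -/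
def IsBipartition {V : Type} [DecidableEq V] [Fintype V] (G : SimpleGraph V) (A B : Finset V) : Prop :=
  Disjoint A B ∧ A ∪ B = Finset.univ ∧
    ∀ u v : V, G.Adj u v → (u ∈ A ∧ v ∈ B) ∨ (u ∈ B ∧ v ∈ A)

/-- `G` (with bipartition `A`, `B`) has a bihole of order `k`: an independent
set `I` with `|I ∩ A| = |I ∩ B| = k`. -/
def HasBihole {V : Type} [DecidableEq V] [Fintype V] (G : SimpleGraph V) (A B : Finset V) (k : ℕ) : Prop :=
  ∃ I : Finset V, (∀ u ∈ I, ∀ v ∈ I, ¬ G.Adj u v) ∧ (I ∩ A).card = k ∧ (I ∩ B).card = k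


lemma path_lemma (m : ℕ) (S : Finset ℕ) (hS : ∀ s ∈ S, s < 2*m+1)
    (hind : ∀ s ∈ S, s+1 ∉ S) :
    m * S.card + (S.filter (fun s => s % 2 = 1)).card ≤ m * (m+1) := by
  have step : ∀ s ∈ S, ∀ t ∈ S, s ≠ t → ¬ (s/2 = t/2) ∧ ¬ ((s+1)/2 = (t+1)/2) := by
    intro s hs t ht hne
    have h1 := hind s hs
    have h2 := hind t ht
    constructor <;> intro h <;>
      [ (rcases (by omega : s + 1 = t ∨ t + 1 = s) with h' | h');
        (rcases (by omega : s + 1 = t ∨ t + 1 = s) with h' | h') ] <;>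
      simp_all
  by_cases hodd : ∃ s₀ ∈ S, s₀ % 2 = 1
  · obtain ⟨s₀, hs₀S, hs₀⟩ := hodd
    have hns : s₀ + 1 ∉ S := hind s₀ hs₀S
    have hcard : S.card ≤ m := by
      have hle := Finset.card_le_card_of_injOn
        (f := fun s => if s ≤ s₀ then s/2 else (s+1)/2)
        (t := (Finset.range (m+1)).erase ((s₀+1)/2))
        (by
          intro s hs
          have hlt := hS s hs
          have h0 := hS s₀ hs₀S
          have hne1 : s ≠ s₀ + 1 := fun h => hns (h ▸ hs)
          simp only [Finset.mem_coe, mem_erase, mem_range]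
          by_cases hle : s ≤ s₀
          · rw [if_pos hle]; omega
          · rw [if_neg hle]; omega)
        (by
          intro s hs t ht h
          by_contra hne
          have := step s hs t ht hne
          have h1 := hind s₀ hs₀S
          by_cases h2 : s ≤ s₀ <;> by_cases h3 : t ≤ s₀ <;> simp [h2, h3] at h <;>
            first
            | exact this.1 h
            | exact this.2 h
            | (have hne1 : s ≠ s₀ + 1 := fun h' => hind s₀ hs₀S (h' ▸ hs)
               have hne2 : t ≠ s₀ + 1 := fun h' => hind s₀ hs₀S (h' ▸ ht)
               omega))
      have hE : ((Finset.range (m+1)).erase ((s₀+1)/2)).card = m := by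
        rw [Finset.card_erase_of_mem]
        · simp
        · simp only [mem_range]
          have := hS s₀ hs₀S
          omega
      rw [hE] at hle
      exact hle
    have ha : (S.filter (fun s => s % 2 = 1)).card ≤ m :=
      le_trans (card_le_card (filter_subset _ _)) hcard
    calc m * S.card + (S.filter (fun s => s % 2 = 1)).card ≤ m * m + m :=
          Nat.add_le_add (Nat.mul_le_mul_left m hcard) ha
      _ = m * (m+1) := by ring
  · push_neg at hodd
    have hempty : (S.filter (fun s => s % 2 = 1)) = ∅ := by
      apply filter_eq_empty_iff.mpr
      intro s hs
      exact fun h => (hodd s hs) h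
    have hcard : S.card ≤ m + 1 := by
      have := Finset.card_le_card_of_injOn (f := fun s => s/2)
        (t := Finset.range (m+1))
        (by intro s hs; simp only [Finset.mem_coe, mem_range]; have := hS s hs; omega)
        (by intro s hs t ht h
            by_contra hne
            exact (step s hs t ht hne).1 h)
      simpa using this
    rw [hempty]
    simpa using Nat.mul_le_mul_left m hcard

abbrev Vt (i : ℕ) := Fin i ⊕ (Fin i × Fin (4*i+1))

def adjF (i : ℕ) : Vt i → Vt i → Prop
  | Sum.inr (j,p), Sum.inr (k,q) => j = k ∧ ((p:ℕ) + 1 = q ∨ (q:ℕ) + 1 = p)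
  | _, _ => False

instance adjDec (i : ℕ) : DecidableRel (adjF i) := fun u v => by
  rcases u with a | ⟨j,p⟩ <;> rcases v with b | ⟨k,q⟩ <;>
    first
      | exact isFalse (fun h => h)
      | exact inferInstanceAs (Decidable (_ ∧ _))

def Gr (i : ℕ) : SimpleGraph (Vt i) where
  Adj := adjF i
  symm := by
    refine ⟨fun u v h => ?_⟩
    rcases u with a | ⟨j,p⟩ <;> rcases v with b | ⟨k,q⟩ <;> try exact h.elim
    obtain ⟨h1, h2⟩ := h
    exact ⟨h1.symm, h2.symm⟩
  loopless := by
    refine ⟨fun u h => ?_⟩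
    rcases u with a | ⟨j,p⟩
    · exact h
    · obtain ⟨-, h2⟩ := h; omega

instance (i : ℕ) : DecidableRel (Gr i).Adj := adjDec i

def inlE (i : ℕ) : Fin i ↪ Vt i := ⟨Sum.inl, Sum.inl_injective⟩
def inrE (i : ℕ) : Fin i × Fin (4*i+1) ↪ Vt i := ⟨Sum.inr, Sum.inr_injective⟩

def As (i : ℕ) : Finset (Vt i) :=
  (univ.map (inlE i)) ∪ ((univ ×ˢ (univ.filter (fun p : Fin (4*i+1) => (p:ℕ) % 2 = 1))).map (inrE i))

def Bs (i : ℕ) : Finset (Vt i) :=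
  (univ ×ˢ (univ.filter (fun p : Fin (4*i+1) => (p:ℕ) % 2 = 0))).map (inrE i)

lemma mem_As_inl (i : ℕ) (a : Fin i) : Sum.inl a ∈ As i := by
  simp [As, inlE]

lemma mem_As_inr (i : ℕ) (j : Fin i) (p : Fin (4*i+1)) :
    (Sum.inr (j,p) : Vt i) ∈ As i ↔ (p:ℕ) % 2 = 1 := by
  simp [As, inlE, inrE]

lemma mem_Bs_inr (i : ℕ) (j : Fin i) (p : Fin (4*i+1)) :
    (Sum.inr (j,p) : Vt i) ∈ Bs i ↔ (p:ℕ) % 2 = 0 := by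
  simp [Bs, inrE]

lemma mem_Bs_inl (i : ℕ) (a : Fin i) : Sum.inl a ∉ Bs i := by
  simp [Bs, inrE]

lemma bip (i : ℕ) : Disjoint (As i) (Bs i) ∧ As i ∪ Bs i = Finset.univ ∧
    ∀ u v : Vt i, (Gr i).Adj u v → (u ∈ As i ∧ v ∈ Bs i) ∨ (u ∈ Bs i ∧ v ∈ As i) := by
  refine ⟨?_, ?_, ?_⟩
  · rw [Finset.disjoint_left]
    rintro (a | ⟨j,p⟩) hA hB
    · exact mem_Bs_inl i a hB
    · rw [mem_As_inr] at hA; rw [mem_Bs_inr] at hB; omega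
  · ext (a | ⟨j,p⟩)
    · simp [mem_As_inl]
    · simp only [mem_union, mem_As_inr, mem_Bs_inr, mem_univ, iff_true]
      omega
  · rintro (a | ⟨j,p⟩) (b | ⟨k,q⟩) h <;> try exact h.elim
    obtain ⟨h1, h2⟩ := h
    rw [mem_As_inr, mem_Bs_inr, mem_As_inr, mem_Bs_inr]
    omega

lemma card_filter_mod (n r : ℕ) (hr : r < 2) :
    ((Finset.range n).filter (fun s => s % 2 = r)).card = (n + 1 - r) / 2 := by
  induction n with
  | zero => interval_cases r <;> simp
  | succ n ih =>
    rw [Finset.range_add_one, Finset.filter_insert]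
    by_cases h : n % 2 = r
    · rw [if_pos h, Finset.card_insert_of_notMem (by simp)]
      omega
    · rw [if_neg h]
      omega

lemma card_fin_filter_mod (i r : ℕ) (hr : r < 2) :
    ((univ : Finset (Fin (4*i+1))).filter (fun p : Fin (4*i+1) => (p:ℕ) % 2 = r)).card
      = (4*i+1+1-r)/2 := by
  rw [← card_filter_mod (4*i+1) r hr]
  have himg : ((univ : Finset (Fin (4*i+1))).filter (fun p : Fin (4*i+1) => (p:ℕ) % 2 = r)).image Fin.val
      = (Finset.range (4*i+1)).filter (fun s => s % 2 = r) := by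
    ext s
    simp only [mem_image, mem_filter, mem_range, mem_univ, true_and]
    constructor
    · rintro ⟨p, hp, rfl⟩; exact ⟨p.isLt, hp⟩
    · rintro ⟨h1, h2⟩; exact ⟨⟨s, h1⟩, h2, rfl⟩
  rw [← himg, Finset.card_image_of_injective _ Fin.val_injective]

lemma card_As (i : ℕ) : (As i).card = i + 2 * i^2 := by
  rw [As, Finset.card_union_of_disjoint, Finset.card_map, Finset.card_map,
      Finset.card_product, card_fin_filter_mod i 1 (by norm_num)]
  · have h2 : (4*i+1+1-1)/2 = 2*i := by omega
    rw [h2, Finset.card_univ, Fintype.card_fin]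
    ring
  · simp only [Finset.disjoint_left, Finset.mem_map, inlE, inrE, Function.Embedding.coeFn_mk]
    rintro v ⟨a, -, rfl⟩ ⟨x, -, h⟩
    exact nomatch h

lemma card_Bs (i : ℕ) : (Bs i).card = i + 2 * i^2 := by
  rw [Bs, Finset.card_map, Finset.card_product, card_fin_filter_mod i 0 (by norm_num)]
  have h2 : (4*i+1+1-0)/2 = 2*i+1 := by omega
  rw [h2, Finset.card_univ, Fintype.card_fin]
  ring

lemma deg_inl (i : ℕ) (a : Fin i) : (Gr i).degree (Sum.inl a) = 0 := by
  rw [SimpleGraph.degree, Finset.card_eq_zero]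
  ext v
  simp only [SimpleGraph.mem_neighborFinset, Finset.notMem_empty, iff_false]
  rcases v with b | x <;> exact fun h => h

lemma deg_inr (i : ℕ) (j : Fin i) (p : Fin (4*i+1)) (hp : (p:ℕ) % 2 = 1) :
    (Gr i).degree (Sum.inr (j,p)) = 2 := by
  have hub : (p:ℕ) + 1 < 4*i+1 := by
    have := p.isLt
    omega
  have hlb : 1 ≤ (p:ℕ) := by omega
  have hnb : (Gr i).neighborFinset (Sum.inr (j,p)) =
      {Sum.inr (j, ⟨(p:ℕ)-1, by omega⟩), Sum.inr (j, ⟨(p:ℕ)+1, hub⟩)} := by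
    ext v
    simp only [SimpleGraph.mem_neighborFinset, Finset.mem_insert, Finset.mem_singleton]
    rcases v with b | ⟨k,q⟩
    · constructor
      · exact fun h => h.elim
      · rintro (h | h) <;> exact nomatch h
    · show (j = k ∧ ((p:ℕ) + 1 = q ∨ (q:ℕ) + 1 = p)) ↔ _
      simp only [Sum.inr.injEq, Prod.mk.injEq, Fin.ext_iff]
      omega
  rw [SimpleGraph.degree, hnb]
  rw [Finset.card_insert_of_notMem, Finset.card_singleton]
  simp only [Finset.mem_singleton, Sum.inr.injEq, Prod.mk.injEq, Fin.ext_iff]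
  omega

lemma filter_deg0 (i : ℕ) :
    ((As i).filter (fun u => (Gr i).degree u = 0)).card = i := by
  have : (As i).filter (fun u => (Gr i).degree u = 0) = univ.map (inlE i) := by
    ext v
    rcases v with a | ⟨j,p⟩
    · simp [mem_As_inl, deg_inl, inlE]
    · simp only [Finset.mem_filter, mem_As_inr, Finset.mem_map, inlE,
        Function.Embedding.coeFn_mk]
      constructor
      · rintro ⟨h1, h2⟩
        rw [deg_inr i j p h1] at h2
        exact absurd h2 (by norm_num)
      · rintro ⟨a, -, h⟩
        exact nomatch h
  rw [this, Finset.card_map, Finset.card_univ, Fintype.card_fin]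

lemma deg_As (i : ℕ) : ∀ u ∈ As i, (Gr i).degree u ≠ 0 → (Gr i).degree u = 2 := by
  rintro (a | ⟨j,p⟩) hu hdeg
  · exact absurd (deg_inl i a) hdeg
  · exact deg_inr i j p ((mem_As_inr i j p).mp hu)

lemma inr_inj (i : ℕ) (j : Fin i) :
    Function.Injective (fun p : Fin (4*i+1) => (Sum.inr (j,p) : Vt i)) := by
  intro p q h
  simpa using h

lemma fiber_sum (i : ℕ) (hpos : 0 < i) (J : Finset (Vt i)) (hJ : ∀ v ∈ J, v.isRight) :
    J.card = ∑ j : Fin i,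
      ((univ : Finset (Fin (4*i+1))).filter (fun p => Sum.inr (j,p) ∈ J)).card := by
  have hmap : ∀ v ∈ J, (Sum.elim (fun _ => (⟨0,hpos⟩ : Fin i)) Prod.fst v) ∈ (univ : Finset (Fin i)) :=
    fun v _ => mem_univ _
  rw [Finset.card_eq_sum_card_fiberwise hmap]
  apply Finset.sum_congr rfl
  intro j _
  have : J.filter (fun v => Sum.elim (fun _ => (⟨0,hpos⟩ : Fin i)) Prod.fst v = j)
      = ((univ : Finset (Fin (4*i+1))).filter (fun p => Sum.inr (j,p) ∈ J)).image
          (fun p => Sum.inr (j,p)) := by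
    ext v
    rcases v with a | ⟨k,q⟩
    · simp only [Finset.mem_filter, Finset.mem_image]
      constructor
      · rintro ⟨hv, -⟩
        exact absurd (hJ _ hv) (by simp)
      · rintro ⟨p, -, h⟩
        exact nomatch h
    · simp only [Finset.mem_filter, Finset.mem_image, Sum.elim_inr, Finset.mem_univ, true_and]
      constructor
      · rintro ⟨hv, rfl⟩
        exact ⟨q, hv, rfl⟩
      · rintro ⟨p, hp, h⟩
        obtain ⟨h1, h2⟩ : j = k ∧ p = q := by
          simpa [Prod.ext_iff] using h
        subst h1; subst h2
        exact ⟨hp, rfl⟩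
  rw [this, Finset.card_image_of_injective _ (inr_inj i j)]

lemma bihole_nat (i : ℕ) (hi : Even i) (hpos : 0 < i) (k : ℕ) (I : Finset (Vt i))
    (hind : ∀ u ∈ I, ∀ v ∈ I, ¬ (Gr i).Adj u v)
    (hA : (I ∩ As i).card = k) (hB : (I ∩ Bs i).card = k) :
    4 * k ≤ 4 * i^2 + 3 * i := by
  set n := 4*i+1 with hn
  -- positions of I on path j
  set Sj : Fin i → Finset ℕ := fun j =>
    ((univ : Finset (Fin n)).filter (fun p => Sum.inr (j,p) ∈ I)).image Fin.val with hSj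
  have hSrange : ∀ j, ∀ s ∈ Sj j, s < 2*(2*i)+1 := by
    intro j s hs
    simp only [hSj, Finset.mem_image, Finset.mem_filter] at hs
    obtain ⟨p, -, rfl⟩ := hs
    have := p.isLt
    omega
  have hSind : ∀ j, ∀ s ∈ Sj j, s+1 ∉ Sj j := by
    intro j s hs hs1
    simp only [hSj, Finset.mem_image, Finset.mem_filter, Finset.mem_univ, true_and] at hs hs1
    obtain ⟨p, hp, rfl⟩ := hs
    obtain ⟨q, hq, hq1⟩ := hs1
    exact hind _ hp _ hq ⟨rfl, Or.inl hq1.symm⟩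
  -- filtered cardinalities
  have hfilt : ∀ (j : Fin i) (r : ℕ),
      ((Sj j).filter (fun s => s % 2 = r)).card =
      ((univ : Finset (Fin n)).filter (fun p => Sum.inr (j,p) ∈ I ∧ (p:ℕ) % 2 = r)).card := by
    intro j r
    rw [hSj]
    rw [Finset.filter_image, Finset.filter_filter, Finset.card_image_of_injective _ Fin.val_injective]
  -- B count
  have hBsum : k = ∑ j : Fin i, ((Sj j).filter (fun s => s % 2 = 0)).card := by
    rw [← hB, fiber_sum i hpos (I ∩ Bs i) ?side]
    case side =>
      rintro (a | x) hv
      · exact absurd (Finset.mem_inter.mp hv).2 (mem_Bs_inl i a)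
      · simp
    apply Finset.sum_congr rfl
    intro j _
    rw [hfilt j 0]
    congr 1
    apply Finset.filter_congr
    intro p _
    simp [mem_Bs_inr]
  -- A count
  have hAsum : k ≤ i + ∑ j : Fin i, ((Sj j).filter (fun s => s % 2 = 1)).card := by
    have hsplit := Finset.card_filter_add_card_filter_not
      (s := I ∩ As i) (p := fun v => v.isLeft)
    have hleft : ((I ∩ As i).filter (fun v => v.isLeft)).card ≤ i := by
      have hsub : (I ∩ As i).filter (fun v => v.isLeft) ⊆ univ.map (inlE i) := by
        rintro (a | x) hv
        · simp [inlE]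
        · simp only [Finset.mem_filter] at hv
          exact absurd hv.2 (by simp)
      have := Finset.card_le_card hsub
      simpa using this
    have hright : ((I ∩ As i).filter (fun v => ¬ v.isLeft)).card
        = ∑ j : Fin i, ((Sj j).filter (fun s => s % 2 = 1)).card := by
      rw [fiber_sum i hpos _ ?side2]
      case side2 =>
        rintro (a | x) hv
        · simp only [Finset.mem_filter] at hv
          exact absurd rfl hv.2
        · simp
      apply Finset.sum_congr rfl
      intro j _
      rw [hfilt j 1]
      congr 1
      apply Finset.filter_congr
      intro p _
      simp [mem_As_inr]
    omega
  -- per-path bound, summed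
  have hsumpath : ∑ j : Fin i, (2*i * (Sj j).card + ((Sj j).filter (fun s => s % 2 = 1)).card)
      ≤ i * (2*i * (2*i+1)) := by
    calc _ ≤ ∑ _j : Fin i, 2*i*(2*i+1) := by
          apply Finset.sum_le_sum
          intro j _
          exact path_lemma (2*i) (Sj j) (hSrange j) (hSind j)
      _ = i * (2*i*(2*i+1)) := by
          rw [Finset.sum_const, Finset.card_univ, Fintype.card_fin, smul_eq_mul]
  -- split each card into odd + even parts
  have hcardsplit : ∀ j : Fin i, (Sj j).card =
      ((Sj j).filter (fun s => s % 2 = 1)).card + ((Sj j).filter (fun s => s % 2 = 0)).card := by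
    intro j
    have := Finset.card_filter_add_card_filter_not
      (s := Sj j) (p := fun s => s % 2 = 1)
    have heq : (Sj j).filter (fun s => ¬ s % 2 = 1) = (Sj j).filter (fun s => s % 2 = 0) := by
      apply Finset.filter_congr
      intro s _
      omega
    rw [heq] at this
    omega
  set sa := ∑ j : Fin i, ((Sj j).filter (fun s => s % 2 = 1)).card with hsa
  set sb := ∑ j : Fin i, ((Sj j).filter (fun s => s % 2 = 0)).card with hsb
  have hmain : 2*i*sa + 2*i*sb + sa ≤ i * (2*i*(2*i+1)) := by
    have hSsum : ∑ j : Fin i, (Sj j).card = sa + sb := by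
      rw [hsa, hsb, ← Finset.sum_add_distrib]
      exact Finset.sum_congr rfl (fun j _ => hcardsplit j)
    have h1 : ∑ j : Fin i, (2*i * (Sj j).card + ((Sj j).filter (fun s => s % 2 = 1)).card)
        = 2*i*(sa+sb) + sa := by
      rw [Finset.sum_add_distrib, ← Finset.mul_sum, hSsum, ← hsa]
    calc 2*i*sa + 2*i*sb + sa = 2*i*(sa+sb) + sa := by ring
      _ = _ := h1.symm
      _ ≤ _ := hsumpath
  -- final arithmetic
  obtain ⟨m, rfl⟩ := hi
  rw [← hBsum] at hmain
  by_contra hcon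
  push_neg at hcon
  have e1 : (2*(m+m)+1)*k ≤ (2*(m+m)+1)*((m+m) + sa) := Nat.mul_le_mul_left _ hAsum
  have hkey : (8*m+1)*k ≤ 32*m^3+16*m^2+2*m := by nlinarith [hmain, e1]
  have hlt : 16*m^2+6*m < 4*k := by nlinarith [hcon]
  obtain ⟨M, hM⟩ : ∃ M, m^2 = M := ⟨_, rfl⟩
  rw [hM] at hlt
  have h4 : 8*M+3*m+1 ≤ 2*k := by omega
  rw [← hM] at h4
  have e2 : (8*m+1)*(8*m^2+3*m+1) ≤ (8*m+1)*(2*k) := Nat.mul_le_mul_left _ h4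
  have e3 : (8*m+1)*(2*k) ≤ 2*(32*m^3+16*m^2+2*m) := by
    calc (8*m+1)*(2*k) = 2*((8*m+1)*k) := by ring
      _ ≤ 2*(32*m^3+16*m^2+2*m) := Nat.mul_le_mul_left _ hkey
  have idl : (8*m+1)*(8*m^2+3*m+1) = 64*m^3+32*m^2+11*m+1 := by ring
  have : (64:ℕ)*m^3+32*m^2+11*m+1 ≤ 64*m^3+32*m^2+4*m := by
    calc (64:ℕ)*m^3+32*m^2+11*m+1 = (8*m+1)*(8*m^2+3*m+1) := idl.symm
      _ ≤ (8*m+1)*(2*k) := e2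
      _ ≤ 2*(32*m^3+16*m^2+2*m) := e3
      _ = 64*m^3+32*m^2+4*m := by ring
  have hm : 0 < m := by omega
  nlinarith [this, hm]


/-- For every even positive integer `i`, there is a bipartite graph `G` with
`|A| = |B| = i + 2i²` in which exactly `i` vertices of `A` are isolated, all
other vertices of `A` have degree exactly `2`, and every bihole of `G` has
order at most `i² + (3/4)·i`. -/
theorem stmt8 (i : ℕ) (hi : Even i) (hpos : 0 < i) :
    ∃ (V : Type) (_ : DecidableEq V) (_ : Fintype V) (G : SimpleGraph V) (_ : DecidableRel G.Adj)
      (A B : Finset V),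
      IsBipartition G A B ∧
      A.card = i + 2 * i ^ 2 ∧ B.card = i + 2 * i ^ 2 ∧
      (A.filter (fun u => G.degree u = 0)).card = i ∧
      (∀ u ∈ A, G.degree u ≠ 0 → G.degree u = 2) ∧
      (∀ k : ℕ, HasBihole G A B k → (k : ℝ) ≤ (i : ℝ) ^ 2 + 3 / 4 * (i : ℝ)) := by
  refine ⟨Vt i, inferInstance, inferInstance, Gr i, adjDec i, As i, Bs i, bip i,
    card_As i, card_Bs i, filter_deg0 i, deg_As i, ?_⟩
  intro k hk
  obtain ⟨I, hind, hA, hB⟩ := hk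
  have h := bihole_nat i hi hpos k I hind hA hB
  have h' : (4:ℝ) * (k:ℝ) ≤ 4 * (i:ℝ)^2 + 3 * (i:ℝ) := by exact_mod_cast h
  linarith
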